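/- For every integer n ≥ 0 with W(n+1) ≥ 5, one has |q_{n+1} − q_n| ≤ e^{−W(n+1)}/(10·(n+1)). -/

import Mathlib

/-- Principal branch of the Lambert W function on `[0, ∞)`: for `x ≥ 0`,
`lambertW x` is the unique `y ≥ 0` with `y * exp y = x`. -/
noncomputable def lambertW (x : ℝ) : ℝ := Function.invFun (fun y : ℝ => y * Real.exp y) x

/-- `q n = 1 - e^{-R} (1 - 3/(2R) - 10/R² - 9/R³ + 1/R⁴) / (12 (1 + 1/R)³)` with `R = W(n+1)`. -/
noncomputable def q (n : ℕ) : ℝ :=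
  1 - Real.exp (-(lambertW (n + 1))) *
      (1 - 3 / (2 * lambertW (n + 1)) - 10 / (lambertW (n + 1)) ^ 2
        - 9 / (lambertW (n + 1)) ^ 3 + 1 / (lambertW (n + 1)) ^ 4) /
    (12 * (1 + 1 / (lambertW (n + 1))) ^ 3)

lemma lambertW_spec (x : ℝ) (hx : 0 ≤ x) :
    lambertW x * Real.exp (lambertW x) = x := by
  have hcont : ContinuousOn (fun y : ℝ => y * Real.exp y) (Set.Icc 0 x) :=
    (continuous_id.mul Real.continuous_exp).continuousOn
  have hmem : x ∈ Set.Icc ((0:ℝ) * Real.exp 0) (x * Real.exp x) := by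
    constructor
    · simp [hx]
    · nlinarith [Real.one_le_exp hx]
  obtain ⟨y, _, hy⟩ := intermediate_value_Icc hx hcont hmem
  exact Function.invFun_eq (f := fun y : ℝ => y * Real.exp y) ⟨y, hy⟩

lemma lambertW_nonneg (x : ℝ) (hx : 0 ≤ x) : 0 ≤ lambertW x := by
  have h := lambertW_spec x hx
  by_contra hneg
  push_neg at hneg
  have := mul_neg_of_neg_of_pos hneg (Real.exp_pos (lambertW x))
  linarith

lemma lambertW_lt (x y : ℝ) (hx : 0 ≤ x) (hxy : x < y) :
    lambertW x < lambertW y := by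
  have ha := lambertW_spec x hx
  have hb := lambertW_spec y (by linarith)
  have ha0 := lambertW_nonneg x hx
  by_contra hba
  push_neg at hba
  have h1 : lambertW y * Real.exp (lambertW y) ≤ lambertW x * Real.exp (lambertW y) :=
    mul_le_mul_of_nonneg_right hba (Real.exp_pos _).le
  have h2 : lambertW x * Real.exp (lambertW y) ≤ lambertW x * Real.exp (lambertW x) :=
    mul_le_mul_of_nonneg_left (Real.exp_le_exp.mpr hba) ha0
  linarith

noncomputable def Gfun (R : ℝ) : ℝ :=
  Real.exp (-R) * (2*R^4 - 3*R^3 - 20*R^2 - 18*R + 2) / (24*R^4 + 72*R^3 + 72*R^2 + 24*R)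

noncomputable def Gder (R : ℝ) : ℝ :=
  Real.exp (-R) * (-48*R^8 - 72*R^7 + 768*R^6 + 3288*R^5 + 5424*R^4 + 3888*R^3
      + 672*R^2 - 336*R - 48) / (24*R^4 + 72*R^3 + 72*R^2 + 24*R)^2

lemma hd_poly (a b c d e x : ℝ) :
    HasDerivAt (fun x : ℝ => a*x^4 + b*x^3 + c*x^2 + d*x + e)
      (4*a*x^3 + 3*b*x^2 + 2*c*x + d) x := by
  have h := ((((hasDerivAt_pow 4 x).const_mul a).add
      ((hasDerivAt_pow 3 x).const_mul b)).add
      ((hasDerivAt_pow 2 x).const_mul c)).add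
      (((hasDerivAt_id x).const_mul d).add (hasDerivAt_const x e))
  have heq : (fun x : ℝ => a*x^4 + b*x^3 + c*x^2 + d*x + e)
      = fun x : ℝ => (a*x^4 + b*x^3 + c*x^2) + (d*(id x) + e) := by
    funext y; simp; ring
  rw [heq]
  refine h.congr_deriv ?_
  push_cast
  ring

lemma hasDerivAt_Gfun (R : ℝ) (hR : 5 ≤ R) : HasDerivAt Gfun (Gder R) R := by
  have hDpos : 0 < 24*R^4 + 72*R^3 + 72*R^2 + 24*R := by nlinarith
  have he : HasDerivAt (fun x : ℝ => Real.exp (-x)) (Real.exp (-R) * (-1)) R := by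
    have := ((hasDerivAt_id R).neg).exp
    simpa using this
  have hN := hd_poly 2 (-3) (-20) (-18) 2 R
  have hD := hd_poly 24 72 72 24 0 R
  have h := (he.mul hN).div hD (by intro hc; rw [add_zero] at hc; exact hDpos.ne' hc)
  have hfun : Gfun = fun x : ℝ =>
      (Real.exp (-x) * (2*x^4 + (-3)*x^3 + (-20)*x^2 + (-18)*x + 2)) /
        (24*x^4 + 72*x^3 + 72*x^2 + 24*x + 0) := by
    funext y; unfold Gfun; ring_nf
  rw [hfun]
  refine h.congr_deriv ?_
  unfold Gder
  simp only [Pi.mul_apply]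
  ring

lemma Gder_bound (R : ℝ) (hR : 5 ≤ R) : |Gder R| ≤ Real.exp (-R) / 10 := by
  have hS : (0:ℝ) ≤ R - 5 := by linarith
  have p2 : (0:ℝ) ≤ (R-5)^2 := pow_nonneg hS 2
  have p3 : (0:ℝ) ≤ (R-5)^3 := pow_nonneg hS 3
  have p4 : (0:ℝ) ≤ (R-5)^4 := pow_nonneg hS 4
  have p5 : (0:ℝ) ≤ (R-5)^5 := pow_nonneg hS 5
  have p6 : (0:ℝ) ≤ (R-5)^6 := pow_nonneg hS 6
  have p7 : (0:ℝ) ≤ (R-5)^7 := pow_nonneg hS 7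
  have p8 : (0:ℝ) ≤ (R-5)^8 := pow_nonneg hS 8
  have hDpos : 0 < 24*R^4 + 72*R^3 + 72*R^2 + 24*R := by nlinarith
  have hD2pos : 0 < (24*R^4 + 72*R^3 + 72*R^2 + 24*R)^2 := by positivity
  have hub : (-48*R^8 - 72*R^7 + 768*R^6 + 3288*R^5 + 5424*R^4 + 3888*R^3
      + 672*R^2 - 336*R - 48) * 10 ≤ (24*R^4 + 72*R^3 + 72*R^2 + 24*R)^2 := by
    have key : (24*R^4 + 72*R^3 + 72*R^2 + 24*R)^2
        - (-48*R^8 - 72*R^7 + 768*R^6 + 3288*R^5 + 5424*R^4 + 3888*R^3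
          + 672*R^2 - 336*R - 48) * 10
        = 653935680 + 1042485120*(R-5) + 710972496*(R-5)^2 + 272262576*(R-5)^3
          + 64250400*(R-5)^4 + 9591840*(R-5)^5 + 886320*(R-5)^6 + 46416*(R-5)^7
          + 1056*(R-5)^8 := by ring
    linarith
  have hlb : -((24*R^4 + 72*R^3 + 72*R^2 + 24*R)^2)
      ≤ (-48*R^8 - 72*R^7 + 768*R^6 + 3288*R^5 + 5424*R^4 + 3888*R^3
        + 672*R^2 - 336*R - 48) * 10 := by
    have key : (24*R^4 + 72*R^3 + 72*R^2 + 24*R)^2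
        + (-48*R^8 - 72*R^7 + 768*R^6 + 3288*R^5 + 5424*R^4 + 3888*R^3
          + 672*R^2 - 336*R - 48) * 10
        = 689757120 + 838684800*(R-5) + 440124336*(R-5)^2 + 129849936*(R-5)^3
          + 23462880*(R-5)^4 + 2642400*(R-5)^5 + 179280*(R-5)^6 + 6576*(R-5)^7
          + 96*(R-5)^8 := by ring
    linarith
  unfold Gder
  rw [abs_div, abs_mul, abs_of_pos (Real.exp_pos _), abs_of_pos hD2pos,
    div_le_div_iff₀ hD2pos (by norm_num)]
  rcases abs_cases (-48*R^8 - 72*R^7 + 768*R^6 + 3288*R^5 + 5424*R^4 + 3888*R^3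
      + 672*R^2 - 336*R - 48) with ⟨habs, _⟩ | ⟨habs, _⟩ <;> rw [habs] <;>
    nlinarith [Real.exp_pos (-R), mul_le_mul_of_nonneg_left hub (Real.exp_pos (-R)).le,
      mul_le_mul_of_nonneg_left hlb (Real.exp_pos (-R)).le]

lemma q_eq (n : ℕ) (hw : 0 < lambertW (n + 1)) :
    q n = 1 - Gfun (lambertW (n + 1)) := by
  unfold q Gfun
  set w := lambertW ((n:ℝ) + 1) with hwdef
  have h1 : w ≠ 0 := hw.ne'
  have h2 : (1:ℝ) + 1/w ≠ 0 := by
    have : 0 < (1:ℝ) + 1/w := by positivity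
    exact this.ne'
  have h3 : 24*w^4 + 72*w^3 + 72*w^2 + 24*w ≠ 0 := by nlinarith
  field_simp
  ring

theorem stmt_13 (n : ℕ) (h : 5 ≤ lambertW (n + 1)) :
    |q (n + 1) - q n| ≤ Real.exp (-(lambertW (n + 1))) / (10 * ((n : ℝ) + 1)) := by
  have hx1 : (0:ℝ) ≤ (n:ℝ) + 1 := by positivity
  have hx2 : (0:ℝ) ≤ (n:ℝ) + 2 := by positivity
  have hW1 := lambertW_spec ((n:ℝ)+1) hx1
  have hW2 := lambertW_spec ((n:ℝ)+2) hx2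
  set R1 := lambertW ((n:ℝ) + 1) with hR1def
  set R2 := lambertW ((n:ℝ) + 2) with hR2def
  have hlt : R1 < R2 := lambertW_lt _ _ hx1 (by linarith)
  have hR2 : 5 ≤ R2 := by linarith
  have hq0 : q n = 1 - Gfun R1 := q_eq n (by linarith)
  have hcast : ((n+1:ℕ):ℝ) + 1 = (n:ℝ) + 2 := by push_cast; ring
  have hq1 : q (n+1) = 1 - Gfun R2 := by
    have h0 : 0 < lambertW (((n+1:ℕ):ℝ) + 1) := by rw [hcast]; linarith
    have := q_eq (n+1) h0
    rw [hcast] at this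
    exact this
  -- MVT for Gfun on [R1, R2]
  have hcont : ContinuousOn Gfun (Set.Icc R1 R2) := fun x hx =>
    (hasDerivAt_Gfun x (by have := hx.1; linarith)).continuousAt.continuousWithinAt
  obtain ⟨c, hc, hceq⟩ := exists_hasDerivAt_eq_slope Gfun Gder hlt hcont
    (fun x hx => hasDerivAt_Gfun x (by have := hx.1; linarith))
  have hGdiff : Gfun R2 - Gfun R1 = Gder c * (R2 - R1) := by
    rw [eq_div_iff (by intro hz; rw [sub_eq_zero] at hz; exact hlt.ne' hz)] at hceq
    linarith
  -- MVT for y * exp y on [R1, R2]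
  have hgc : ContinuousOn (fun y : ℝ => y * Real.exp y) (Set.Icc R1 R2) :=
    (continuous_id.mul Real.continuous_exp).continuousOn
  obtain ⟨ξ, hξ, hξeq⟩ := exists_hasDerivAt_eq_slope (fun y : ℝ => y * Real.exp y)
    (fun y : ℝ => 1 * Real.exp y + y * Real.exp y) hlt hgc
    (fun x _ => (hasDerivAt_id x).mul (Real.hasDerivAt_exp x))
  have hgap : (1 + ξ) * Real.exp ξ * (R2 - R1) = 1 := by
    rw [eq_div_iff (by intro hz; rw [sub_eq_zero] at hz; exact hlt.ne' hz)] at hξeq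
    rw [hW1, hW2] at hξeq
    linear_combination hξeq
  have hgap2 : R2 - R1 ≤ Real.exp (-R1) / (1 + R1) := by
    have hξ1 : R1 < ξ := hξ.1
    have he1 : (1 + R1) * Real.exp R1 ≤ (1 + ξ) * Real.exp ξ :=
      mul_le_mul (by linarith) (Real.exp_le_exp.mpr hξ1.le) (Real.exp_pos _).le (by linarith)
    have hpos : 0 < (1 + R1) * Real.exp R1 :=
      mul_pos (by linarith) (Real.exp_pos _)
    have hkey : (R2 - R1) * ((1 + R1) * Real.exp R1) ≤ 1 := by
      nlinarith [mul_le_mul_of_nonneg_right he1 (le_of_lt (sub_pos.mpr hlt))]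
    have target_eq : Real.exp (-R1) / (1 + R1) = 1 / ((1 + R1) * Real.exp R1) := by
      rw [Real.exp_neg]
      field_simp
    rw [target_eq, le_div_iff₀ hpos]
    exact hkey
  have hc5 : 5 ≤ c := by linarith [hc.1]
  have hb1 : |Gder c| ≤ Real.exp (-R1) / 10 := by
    refine (Gder_bound c hc5).trans ?_
    have hmono : Real.exp (-c) ≤ Real.exp (-R1) := Real.exp_le_exp.mpr (by linarith [hc.1])
    linarith
  have hexp1 : Real.exp (-R1) * ((n:ℝ) + 1) = R1 := by
    rw [Real.exp_neg, ← hW1]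
    field_simp
  have habs : |q (n+1) - q n| = |Gder c| * (R2 - R1) := by
    rw [hq0, hq1]
    have heq2 : (1 - Gfun R2) - (1 - Gfun R1) = -(Gfun R2 - Gfun R1) := by ring
    rw [heq2, abs_neg, hGdiff, abs_mul, abs_of_pos (sub_pos.mpr hlt)]
  rw [habs]
  have step : |Gder c| * (R2 - R1) ≤ (Real.exp (-R1)/10) * (Real.exp (-R1)/(1+R1)) :=
    mul_le_mul hb1 hgap2 (by linarith) (by positivity)
  refine step.trans ?_
  have hepos := Real.exp_pos (-R1)
  have hn1 : (0:ℝ) < (n:ℝ) + 1 := by positivity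
  rw [div_mul_div_comm, div_le_div_iff₀ (by positivity) (by positivity)]
  nlinarith [hexp1, hepos, mul_pos hepos hn1]
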